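/- Let d ≥ 2, 0 < p < p' < 1, and consider the standard monotone coupling of bond percolation with parameters p and p'. Let 𝓕_{p'} := σ(ω_{p'}(e) : e an edge of ℤ^d). Then for every N, almost surely 𝔼[Z_N(ω_p) | 𝓕_{p'}] = (p/p')^N · Z_N(ω_{p'}). -/

import Mathlib

open MeasureTheory ProbabilityTheory Filter

namespace SAW

abbrev V (d : ℕ) := Fin d → ℤ
abbrev Edge (d : ℕ) := (Fin d → ℤ) × Fin d

/-- The `i`-th unit vector of `ℤ^d`. -/
def unit (d : ℕ) (i : Fin d) : V d := fun j => if j = i then 1 else 0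

/-- Nearest-neighbour adjacency on `ℤ^d`. -/
def Adj {d : ℕ} (x y : V d) : Prop :=
  ∃ i : Fin d, y = x + unit d i ∨ x = y + unit d i

/-- Self-avoiding nearest-neighbour path of length `N` in `ℤ^d`. -/
def IsSAW {d N : ℕ} (S : Fin (N + 1) → V d) : Prop :=
  Function.Injective S ∧ ∀ n : Fin N, Adj (S n.castSucc) (S n.succ)

/-- The path `S` uses the edge `e` (the edge `e = (v, i)` joins `v` and `v + unit d i`). -/
def UsesEdge {d N : ℕ} (S : Fin (N + 1) → V d) (e : Edge d) : Prop :=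
  ∃ n : Fin N,
    (S n.castSucc = e.1 ∧ S n.succ = e.1 + unit d e.2) ∨
    (S n.succ = e.1 ∧ S n.castSucc = e.1 + unit d e.2)

/-- The path `S` is open for the environment `η` (`η e` means that the edge `e` is open). -/
def OpenPath {d N : ℕ} (η : Edge d → Prop) (S : Fin (N + 1) → V d) : Prop :=
  ∀ e : Edge d, UsesEdge S e → η e

/-- `s_N` : the number of self-avoiding paths of length `N` starting at the origin. -/
noncomputable def sCount (d N : ℕ) : ℕ :=
  Nat.card {S : Fin (N + 1) → V d // IsSAW S ∧ S 0 = 0}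

/-- `Z_N(x)` : the number of open self-avoiding paths of length `N` starting at `x`. -/
noncomputable def Z {d : ℕ} (η : Edge d → Prop) (N : ℕ) (x : V d) : ℕ :=
  Nat.card {S : Fin (N + 1) → V d // IsSAW S ∧ S 0 = x ∧ OpenPath η S}

section Comb

variable {d N : ℕ}

lemma unit_injective (d : ℕ) : Function.Injective (unit d) := by
  intro i j h
  by_contra hij
  have h2 := congrFun h i
  simp [unit, hij] at h2

lemma unit_add_ne_zero (i j : Fin d) : unit d i + unit d j ≠ 0 := by
  intro h
  have h2 := congrFun h i
  simp only [Pi.add_apply, Pi.zero_apply, unit, if_pos rfl] at h2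
  by_cases hij : i = j
  · rw [if_pos hij] at h2; exact absurd h2 (by norm_num)
  · rw [if_neg hij] at h2; exact absurd h2 (by norm_num)

lemma edge_eq {e f : Edge d}
    (h : (e.1 = f.1 ∧ e.1 + unit d e.2 = f.1 + unit d f.2) ∨
         (e.1 = f.1 + unit d f.2 ∧ e.1 + unit d e.2 = f.1)) : e = f := by
  rcases h with ⟨h1, h2⟩ | ⟨h1, h2⟩
  · rw [h1] at h2
    exact Prod.ext h1 (unit_injective d (add_left_cancel h2))
  · exfalso
    rw [h1] at h2
    have h3 : f.1 + (unit d f.2 + unit d e.2) = f.1 + 0 := by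
      rw [← add_assoc, h2, add_zero]
    exact unit_add_ne_zero _ _ (add_left_cancel h3)

noncomputable def edgeAt (S : Fin (N + 1) → V d) (n : Fin N)
    (h : Adj (S n.castSucc) (S n.succ)) : Edge d :=
  if S n.succ = S n.castSucc + unit d h.choose then (S n.castSucc, h.choose)
  else (S n.succ, h.choose)

lemma edgeAt_spec (S : Fin (N + 1) → V d) (n : Fin N) (h : Adj (S n.castSucc) (S n.succ)) :
    (S n.castSucc = (edgeAt S n h).1 ∧ S n.succ = (edgeAt S n h).1 + unit d (edgeAt S n h).2) ∨
    (S n.succ = (edgeAt S n h).1 ∧ S n.castSucc = (edgeAt S n h).1 + unit d (edgeAt S n h).2) := by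
  unfold edgeAt
  split_ifs with h1
  · exact Or.inl ⟨rfl, h1⟩
  · rcases h.choose_spec with h2 | h2
    · exact absurd h2 h1
    · exact Or.inr ⟨rfl, h2⟩

lemma usesEdge_edgeAt (S : Fin (N + 1) → V d) (n : Fin N) (h : Adj (S n.castSucc) (S n.succ)) :
    UsesEdge S (edgeAt S n h) := ⟨n, edgeAt_spec S n h⟩

lemma edgeAt_eq {S : Fin (N + 1) → V d} {n : Fin N} {e : Edge d}
    (h : Adj (S n.castSucc) (S n.succ))
    (he : (S n.castSucc = e.1 ∧ S n.succ = e.1 + unit d e.2) ∨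
          (S n.succ = e.1 ∧ S n.castSucc = e.1 + unit d e.2)) :
    edgeAt S n h = e := by
  apply edge_eq
  rcases edgeAt_spec S n h with ⟨a1, a2⟩ | ⟨a1, a2⟩ <;> rcases he with ⟨b1, b2⟩ | ⟨b1, b2⟩
  · exact Or.inl ⟨a1.symm.trans b1, a2.symm.trans b2⟩
  · exact Or.inr ⟨a1.symm.trans b2, a2.symm.trans b1⟩
  · exact Or.inr ⟨a1.symm.trans b2, a2.symm.trans b1⟩
  · exact Or.inl ⟨a1.symm.trans b1, a2.symm.trans b2⟩

lemma edgeAt_injective {S : Fin (N + 1) → V d} (hS : IsSAW S) :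
    Function.Injective fun n => edgeAt S n (hS.2 n) := by
  intro n m hnm
  simp only at hnm
  rcases edgeAt_spec S n (hS.2 n) with ⟨a1, a2⟩ | ⟨a1, a2⟩ <;>
    rcases edgeAt_spec S m (hS.2 m) with ⟨b1, b2⟩ | ⟨b1, b2⟩ <;>
      rw [hnm] at a1 a2
  · exact Fin.castSucc_injective _ (hS.1 (a1.trans b1.symm))
  · exfalso
    have h1 := congrArg Fin.val (hS.1 (a1.trans b1.symm))
    have h2 := congrArg Fin.val (hS.1 (a2.trans b2.symm))
    simp only [Fin.coe_castSucc, Fin.val_succ] at h1 h2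
    omega
  · exfalso
    have h1 := congrArg Fin.val (hS.1 (a1.trans b1.symm))
    have h2 := congrArg Fin.val (hS.1 (a2.trans b2.symm))
    simp only [Fin.coe_castSucc, Fin.val_succ] at h1 h2
    omega
  · exact Fin.succ_injective _ (hS.1 (a1.trans b1.symm))

noncomputable def edges (S : Fin (N + 1) → V d) (hS : IsSAW S) : Finset (Edge d) :=
  Finset.image (fun n => edgeAt S n (hS.2 n)) Finset.univ

lemma card_edges {S : Fin (N + 1) → V d} (hS : IsSAW S) : (edges S hS).card = N := by
  rw [edges, Finset.card_image_of_injective _ (edgeAt_injective hS), Finset.card_univ,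
    Fintype.card_fin]

lemma openPath_iff {S : Fin (N + 1) → V d} (hS : IsSAW S) (η : Edge d → Prop) :
    OpenPath η S ↔ ∀ e ∈ edges S hS, η e := by
  constructor
  · intro hO e he
    rw [edges, Finset.mem_image] at he
    obtain ⟨n, -, rfl⟩ := he
    exact hO _ (usesEdge_edgeAt S n _)
  · intro hη e hu
    obtain ⟨n, hn⟩ := hu
    rw [← edgeAt_eq (hS.2 n) hn]
    exact hη _ (Finset.mem_image_of_mem _ (Finset.mem_univ n))

lemma saw_finite (d N : ℕ) : {S : Fin (N + 1) → V d | IsSAW S ∧ S 0 = 0}.Finite := by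
  have hD : (Set.range (unit d) ∪ Set.range fun i => -unit d i).Finite :=
    (Set.finite_range _).union (Set.finite_range _)
  have hbig : {g : Fin N → V d |
      ∀ n, g n ∈ Set.range (unit d) ∪ Set.range fun i => -unit d i}.Finite := by
    have h := Set.Finite.pi (fun _ : Fin N => hD)
    apply h.subset
    intro g hg
    simp only [Set.mem_pi, Set.mem_univ, forall_true_left]
    exact fun n => hg n
  apply Set.Finite.of_finite_image
    (f := fun S => fun n : Fin N => S n.succ - S n.castSucc)
  · apply hbig.subset
    rintro _ ⟨S, ⟨hS, -⟩, rfl⟩ n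
    rcases hS.2 n with ⟨i, h | h⟩
    · exact Or.inl ⟨i, by show unit d i = S n.succ - S n.castSucc; rw [h]; abel⟩
    · exact Or.inr ⟨i, by show -unit d i = S n.succ - S n.castSucc; rw [h]; abel⟩
  · intro S hS T hT hfun
    obtain ⟨-, hS0⟩ := hS
    obtain ⟨-, hT0⟩ := hT
    have hmain : ∀ k (hk : k < N + 1), S ⟨k, hk⟩ = T ⟨k, hk⟩ := by
      intro k
      induction k with
      | zero =>
        intro hk
        simp only [Fin.mk_zero]
        rw [hS0, hT0]
      | succ k ih =>
        intro hk
        have hk' : k < N := by omega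
        have hkk : k < N + 1 := by omega
        have hstep := congrFun hfun ⟨k, hk'⟩
        have hc : (⟨k, hk'⟩ : Fin N).castSucc = ⟨k, hkk⟩ := rfl
        have hs : (⟨k, hk'⟩ : Fin N).succ = ⟨k + 1, hk⟩ := rfl
        simp only at hstep
        rw [hc, hs] at hstep
        have hik := ih hkk
        calc S ⟨k + 1, hk⟩ = (S ⟨k + 1, hk⟩ - S ⟨k, hkk⟩) + S ⟨k, hkk⟩ := by abel
          _ = (T ⟨k + 1, hk⟩ - T ⟨k, hkk⟩) + T ⟨k, hkk⟩ := by rw [hstep, hik]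
          _ = T ⟨k + 1, hk⟩ := by abel
    funext k
    have h := hmain k.val k.isLt
    simpa using h

end Comb

/-- The event that all edges in `E` are `q`-open. -/
def Oset {d : ℕ} {Ω : Type*} (X : Ω → Edge d → ℝ) (q : ℝ) (E : Finset (Edge d)) : Set Ω :=
  ⋂ e ∈ E, {a | X a e ≤ q}

lemma Oset_measurable {d : ℕ} {Ω : Type*} [MeasurableSpace Ω] {X : Ω → Edge d → ℝ}
    (hmeas : ∀ e, Measurable fun a => X a e) (q : ℝ) (E : Finset (Edge d)) :
    MeasurableSet (Oset X q E) :=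
  Finset.measurableSet_biInter _ fun e _ => measurableSet_le (hmeas e) measurable_const

lemma core {d : ℕ} {Ω : Type*} [MeasurableSpace Ω] (μ : Measure Ω) [IsProbabilityMeasure μ]
    (X : Ω → Edge d → ℝ) (hmeas : ∀ e, Measurable fun a => X a e)
    (hunif : ∀ e : Edge d,
      Measure.map (fun a => X a e) μ = volume.restrict (Set.Icc (0 : ℝ) 1))
    (hindep : iIndepFun (fun e a => X a e) μ)
    (p p' : ℝ) (hp : 0 < p) (hpp' : p < p') (hp' : p' < 1)
    (E F : Finset (Edge d)) (Sset : Set (∀ e : F, ℝ)) (hSset : MeasurableSet Sset) :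
    μ (((fun a => F.restrict fun e => if X a e ≤ p' then (1 : ℝ) else 0) ⁻¹' Sset)
        ∩ Oset X p E)
      = ENNReal.ofReal (p / p') ^ E.card *
        μ (((fun a => F.restrict fun e => if X a e ≤ p' then (1 : ℝ) else 0) ⁻¹' Sset)
            ∩ Oset X p' E) := by
  classical
  have hp'pos : (0 : ℝ) < p' := hp.trans hpp'
  -- per-edge constraint sets
  set D : (F → Bool) → Edge d → Set ℝ := fun c e =>
    if h : e ∈ F then (if c ⟨e, h⟩ then Set.Iic p' else Set.Ioi p') else Set.univ with hD
  set G : ℝ → (F → Bool) → Edge d → Set ℝ := fun q c e =>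
    (if e ∈ E then Set.Iic q else Set.univ) ∩ D c e with hG
  set Ev : ℝ → (F → Bool) → Set Ω := fun q c =>
    ⋂ e ∈ E ∪ F, (fun a => X a e) ⁻¹' G q c e with hEv
  set CS : Finset (F → Bool) :=
    Finset.univ.filter fun c => (fun e : F => if c e then (1 : ℝ) else 0) ∈ Sset with hCS
  have hDmeas : ∀ c e, MeasurableSet (D c e) := by
    intro c e
    rw [hD]
    dsimp only
    split_ifs
    · exact measurableSet_Iic
    · exact measurableSet_Ioi
    · exact MeasurableSet.univ
  have hGmeas : ∀ q c e, MeasurableSet (G q c e) := by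
    intro q c e
    apply MeasurableSet.inter
    · split_ifs
      · exact measurableSet_Iic
      · exact MeasurableSet.univ
    · exact hDmeas c e
  -- decomposition of the cylinder into boxes
  have hdecomp : ∀ q : ℝ,
      ((fun a => F.restrict fun e => if X a e ≤ p' then (1 : ℝ) else 0) ⁻¹' Sset)
        ∩ Oset X q E = ⋃ c ∈ CS, Ev q c := by
    intro q
    ext a
    simp only [Set.mem_inter_iff, Set.mem_preimage, Oset, Set.mem_iInter, Set.mem_setOf_eq,
      Set.mem_iUnion, hCS, Finset.mem_filter, Finset.mem_univ, true_and, hEv,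
      exists_prop]
    constructor
    · rintro ⟨hS, hE⟩
      refine ⟨fun e => decide (X a e ≤ p'), ?_, ?_⟩
      · have heq : (fun e : F => if decide (X a (e : Edge d) ≤ p') then (1 : ℝ) else 0)
            = F.restrict fun e => if X a e ≤ p' then (1 : ℝ) else 0 := by
          funext e
          simp [Finset.restrict, decide_eq_true_eq]
        rw [heq]
        exact hS
      · intro e he
        refine ⟨?_, ?_⟩
        · by_cases heE : e ∈ E
          · simpa [hG, heE] using hE e heE
          · simp [hG, heE]
        · show X a e ∈ D (fun e => decide (X a (e : Edge d) ≤ p')) e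
          by_cases heF : e ∈ F
          · rw [hD]
            dsimp only
            rw [dif_pos heF]
            by_cases hle : X a e ≤ p'
            · simpa [hle] using hle
            · simpa [hle] using not_le.mp hle
          · simp [hD, heF]
    · rintro ⟨c, hcS, hc⟩
      constructor
      · have heq : F.restrict (fun e => if X a e ≤ p' then (1 : ℝ) else 0)
            = fun e : F => if c e then (1 : ℝ) else 0 := by
          funext e
          have hmem := (hc e (Finset.mem_union_right E e.2)).2
          show (if X a (e : Edge d) ≤ p' then (1 : ℝ) else 0) = _
          rw [hD] at hmem
          dsimp only at hmem
          rw [dif_pos e.2] at hmem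
          by_cases hce : c e
          · rw [Subtype.coe_eta] at hmem
            rw [if_pos hce] at hmem
            rw [if_pos (Set.mem_Iic.mp hmem), if_pos hce]
          · rw [Subtype.coe_eta] at hmem
            rw [if_neg hce] at hmem
            rw [if_neg (not_le.mpr (Set.mem_Ioi.mp hmem)), if_neg hce]
        rw [heq]
        exact hcS
      · intro e heE
        have := (hc e (Finset.mem_union_left F heE)).1
        simpa [hG, heE] using this
  -- pairwise disjointness of the boxes
  have hdisj : ∀ q : ℝ, (CS : Set (F → Bool)).PairwiseDisjoint (Ev q) := by
    intro q c _ c' _ hne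
    rw [Function.onFun]
    rw [Set.disjoint_left]
    intro a ha ha'
    obtain ⟨e, hce⟩ : ∃ e : F, c e ≠ c' e := by
      by_contra hcon
      push_neg at hcon
      exact hne (funext hcon)
    have h1 := (Set.mem_iInter₂.mp ha e (Finset.mem_union_right E e.2))
    have h2 := (Set.mem_iInter₂.mp ha' e (Finset.mem_union_right E e.2))
    have h1' : X a e ∈ D c e := h1.2
    have h2' : X a e ∈ D c' e := h2.2
    rw [hD] at h1' h2'
    dsimp only at h1' h2'
    rw [dif_pos e.2, Subtype.coe_eta] at h1' h2'
    cases hc1 : c e <;> cases hc2 : c' e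
    · exact hce (hc1.trans hc2.symm)
    · rw [if_neg (by simp [hc1])] at h1'
      rw [if_pos hc2] at h2'
      exact absurd (h2'.trans_lt (Set.mem_Ioi.mp h1')) (lt_irrefl _)
    · rw [if_pos hc1] at h1'
      rw [if_neg (by simp [hc2])] at h2'
      exact absurd (h1'.trans_lt (Set.mem_Ioi.mp h2')) (lt_irrefl _)
    · exact hce (hc1.trans hc2.symm)
  have hEvmeas : ∀ q c, MeasurableSet (Ev q c) :=
    fun q c => Finset.measurableSet_biInter _ fun e _ => (hmeas e) (hGmeas q c e)
  have hEvprod : ∀ q c, μ (Ev q c) = ∏ e ∈ E ∪ F, μ ((fun a => X a e) ⁻¹' G q c e) :=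
    fun q c => hindep.meas_biInter fun e _ => ⟨G q c e, hGmeas q c e, rfl⟩
  -- volume computations
  have hvol : ∀ q : ℝ, 0 ≤ q → q ≤ 1 →
      (volume.restrict (Set.Icc (0 : ℝ) 1)) (Set.Iic q) = ENNReal.ofReal q := by
    intro q h0 h1
    rw [Measure.restrict_apply measurableSet_Iic]
    have hiq : Set.Iic q ∩ Set.Icc (0 : ℝ) 1 = Set.Icc 0 q := by
      ext x
      simp only [Set.mem_inter_iff, Set.mem_Iic, Set.mem_Icc]
      constructor
      · rintro ⟨hx, h0x, -⟩; exact ⟨h0x, hx⟩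
      · rintro ⟨h0x, hx⟩; exact ⟨hx, h0x, hx.trans h1⟩
    rw [hiq, Real.volume_Icc, sub_zero]
  have hratio : ENNReal.ofReal p = ENNReal.ofReal (p / p') * ENNReal.ofReal p' := by
    rw [← ENNReal.ofReal_mul (div_nonneg hp.le hp'pos.le), div_mul_cancel₀]
    exact hp'pos.ne'
  -- per-edge factor comparison
  have hfactor : ∀ c : F → Bool, ∀ e ∈ E ∪ F,
      μ ((fun a => X a e) ⁻¹' G p c e)
        = (if e ∈ E then ENNReal.ofReal (p / p') else 1) * μ ((fun a => X a e) ⁻¹' G p' c e) := by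
    intro c e _
    have hmap : ∀ q, μ ((fun a => X a e) ⁻¹' G q c e)
        = (volume.restrict (Set.Icc (0 : ℝ) 1)) (G q c e) := by
      intro q
      rw [← hunif e, Measure.map_apply (hmeas e) (hGmeas q c e)]
    rw [hmap, hmap]
    by_cases heE : e ∈ E
    · rw [if_pos heE]
      have hGq : ∀ q, G q c e = Set.Iic q ∩ D c e := by
        intro q; rw [hG]; dsimp only; rw [if_pos heE]
      rw [hGq, hGq]
      have hDcases : D c e = Set.univ ∨ D c e = Set.Iic p' ∨ D c e = Set.Ioi p' := by
        rw [hD]; dsimp only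
        split_ifs
        · exact Or.inr (Or.inl rfl)
        · exact Or.inr (Or.inr rfl)
        · exact Or.inl rfl
      rcases hDcases with h | h | h <;> rw [h]
      · rw [Set.inter_univ, Set.inter_univ, hvol p hp.le (hpp'.trans hp').le,
          hvol p' hp'pos.le hp'.le, hratio]
      · rw [Set.Iic_inter_Iic, Set.Iic_inter_Iic, min_eq_left hpp'.le, min_self,
          hvol p hp.le (hpp'.trans hp').le, hvol p' hp'pos.le hp'.le, hratio]
      · have h1 : Set.Iic p ∩ Set.Ioi p' = ∅ := by
          apply Set.eq_empty_iff_forall_notMem.mpr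
          rintro x ⟨hx1, hx2⟩
          exact absurd ((hx2.trans_le hx1).trans hpp') (lt_irrefl _)
        have h2 : Set.Iic p' ∩ Set.Ioi p' = ∅ := by
          apply Set.eq_empty_iff_forall_notMem.mpr
          rintro x ⟨hx1, hx2⟩
          exact absurd (hx2.trans_le (Set.mem_Iic.mp hx1)) (lt_irrefl _)
        rw [h1, h2]
        simp
    · rw [if_neg heE]
      have hGq : ∀ q, G q c e = D c e := by
        intro q; rw [hG]; dsimp only; rw [if_neg heE, Set.univ_inter]
      rw [hGq, hGq, one_mul]
  -- put it together
  rw [hdecomp p, hdecomp p',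
    measure_biUnion_finset (hdisj p) (fun c _ => hEvmeas p c),
    measure_biUnion_finset (hdisj p') (fun c _ => hEvmeas p' c),
    Finset.mul_sum]
  apply Finset.sum_congr rfl
  intro c _
  rw [hEvprod p c, hEvprod p' c]
  calc ∏ e ∈ E ∪ F, μ ((fun a => X a e) ⁻¹' G p c e)
      = ∏ e ∈ E ∪ F, ((if e ∈ E then ENNReal.ofReal (p / p') else 1)
          * μ ((fun a => X a e) ⁻¹' G p' c e)) :=
        Finset.prod_congr rfl fun e he => hfactor c e he
    _ = (∏ e ∈ E ∪ F, if e ∈ E then ENNReal.ofReal (p / p') else 1)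
          * ∏ e ∈ E ∪ F, μ ((fun a => X a e) ⁻¹' G p' c e) := Finset.prod_mul_distrib
    _ = ENNReal.ofReal (p / p') ^ E.card
          * ∏ e ∈ E ∪ F, μ ((fun a => X a e) ⁻¹' G p' c e) := by
        rw [Finset.prod_ite_mem, Finset.union_inter_cancel_left, Finset.prod_const]

lemma key_measure {d : ℕ} {Ω : Type*} [MeasurableSpace Ω] (μ : Measure Ω)
    [IsProbabilityMeasure μ]
    (X : Ω → Edge d → ℝ) (hmeas : ∀ e, Measurable fun a => X a e)
    (hunif : ∀ e : Edge d,
      Measure.map (fun a => X a e) μ = volume.restrict (Set.Icc (0 : ℝ) 1))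
    (hindep : iIndepFun (fun e a => X a e) μ)
    (p p' : ℝ) (hp : 0 < p) (hpp' : p < p') (hp' : p' < 1) (E : Finset (Edge d))
    {t : Set Ω}
    (ht : MeasurableSet[MeasurableSpace.comap
      (fun a (e : Edge d) => if X a e ≤ p' then (1 : ℝ) else 0) MeasurableSpace.pi] t) :
    μ (t ∩ Oset X p E) = ENNReal.ofReal (p / p') ^ E.card * μ (t ∩ Oset X p' E) := by
  classical
  set Y : Ω → Edge d → ℝ := fun a e => if X a e ≤ p' then (1 : ℝ) else 0 with hY
  have hYm : Measurable Y :=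
    measurable_pi_lambda _ fun e =>
      Measurable.ite (measurableSet_le (hmeas e) measurable_const) measurable_const
        measurable_const
  have hm : MeasurableSpace.comap Y MeasurableSpace.pi ≤ ‹MeasurableSpace Ω› := hYm.comap_le
  have huniv : μ (Oset X p E) = ENNReal.ofReal (p / p') ^ E.card * μ (Oset X p' E) := by
    have h := core μ X hmeas hunif hindep p p' hp hpp' hp' E ∅
      (Set.univ : Set (∀ e : (∅ : Finset (Edge d)), ℝ)) MeasurableSet.univ
    simpa using h
  have h_eq : MeasurableSpace.comap Y MeasurableSpace.pi
      = MeasurableSpace.generateFrom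
        (Set.preimage Y '' measurableCylinders fun _ : Edge d => ℝ) := by
    rw [← generateFrom_measurableCylinders, MeasurableSpace.comap_generateFrom]
  have h_pi : IsPiSystem (Set.preimage Y '' measurableCylinders fun _ : Edge d => ℝ) := by
    exact (isPiSystem_measurableCylinders (α := fun _ : Edge d => ℝ)).comap Y
  have main : ∀ ⦃t : Set Ω⦄,
      MeasurableSet[MeasurableSpace.comap Y MeasurableSpace.pi] t →
      μ (t ∩ Oset X p E) = ENNReal.ofReal (p / p') ^ E.card * μ (t ∩ Oset X p' E) := by
    refine MeasurableSpace.induction_on_inter (m := MeasurableSpace.comap Y MeasurableSpace.pi)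
      (C := fun t _ => μ (t ∩ Oset X p E)
        = ENNReal.ofReal (p / p') ^ E.card * μ (t ∩ Oset X p' E))
      h_eq h_pi ?_ ?_ ?_ ?_
    · simp
    · rintro _ ⟨u, hu, rfl⟩
      obtain ⟨F, Sset, hSset, rfl⟩ := (mem_measurableCylinders u).mp hu
      have h := core μ X hmeas hunif hindep p p' hp hpp' hp' E F Sset hSset
      exact h
    · intro u hu hC
      have hu' : MeasurableSet u := hm u hu
      have e1 : ∀ q : ℝ, μ (Oset X q E ∩ u) + μ (Oset X q E \ u) = μ (Oset X q E) :=
        fun q => measure_inter_add_diff _ hu'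
      have hcompl : ∀ q : ℝ, uᶜ ∩ Oset X q E = Oset X q E \ u := by
        intro q; rw [Set.diff_eq, Set.inter_comm]
      rw [hcompl, hcompl]
      have hfin : ENNReal.ofReal (p / p') ^ E.card * μ (Oset X p' E ∩ u) ≠ ⊤ :=
        ENNReal.mul_ne_top (ENNReal.pow_ne_top ENNReal.ofReal_ne_top) (measure_ne_top μ _)
      apply (ENNReal.add_right_inj hfin).mp
      have hCu : μ (Oset X p E ∩ u) = ENNReal.ofReal (p / p') ^ E.card * μ (Oset X p' E ∩ u) := by
        rw [Set.inter_comm, hC, Set.inter_comm]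
      calc ENNReal.ofReal (p / p') ^ E.card * μ (Oset X p' E ∩ u) + μ (Oset X p E \ u)
          = μ (Oset X p E ∩ u) + μ (Oset X p E \ u) := by rw [hCu]
        _ = μ (Oset X p E) := e1 p
        _ = ENNReal.ofReal (p / p') ^ E.card * μ (Oset X p' E) := huniv
        _ = ENNReal.ofReal (p / p') ^ E.card
            * (μ (Oset X p' E ∩ u) + μ (Oset X p' E \ u)) := by rw [e1 p']
        _ = ENNReal.ofReal (p / p') ^ E.card * μ (Oset X p' E ∩ u)
            + ENNReal.ofReal (p / p') ^ E.card * μ (Oset X p' E \ u) := by rw [mul_add]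
    · intro f hdisj hfm hC
      have hfm' : ∀ i, MeasurableSet (f i) := fun i => hm _ (hfm i)
      have hiU : ∀ q : ℝ, (⋃ i, f i) ∩ Oset X q E = ⋃ i, f i ∩ Oset X q E := by
        intro q; rw [Set.iUnion_inter]
      rw [hiU, hiU,
        measure_iUnion (fun i j hij => (hdisj hij).mono Set.inter_subset_left
          Set.inter_subset_left)
          (fun i => (hfm' i).inter (Oset_measurable hmeas p E)),
        measure_iUnion (fun i j hij => (hdisj hij).mono Set.inter_subset_left
          Set.inter_subset_left)
          (fun i => (hfm' i).inter (Oset_measurable hmeas p' E))]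
      rw [← ENNReal.tsum_mul_left]
      exact tsum_congr fun i => hC i
  exact main ht

/-- under the standard monotone coupling of bond percolation on `ℤ^d`
(`d ≥ 2`, `0 < p < p' < 1`), with `𝓕_{p'}` the σ-algebra generated by `ω_{p'}`, for every `N`
almost surely `𝔼[Z_N(ω_p) | 𝓕_{p'}] = (p/p')^N · Z_N(ω_{p'})`. -/
theorem statement_8 (d : ℕ) (hd : 2 ≤ d)
    {Ω : Type*} [MeasurableSpace Ω] (μ : Measure Ω) [IsProbabilityMeasure μ]
    (X : Ω → Edge d → ℝ) (hmeas : ∀ e, Measurable fun a => X a e)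
    (hunif : ∀ e : Edge d,
      Measure.map (fun a => X a e) μ = volume.restrict (Set.Icc (0 : ℝ) 1))
    (hindep : iIndepFun (fun e a => X a e) μ)
    (p p' : ℝ) (hp : 0 < p) (hpp' : p < p') (hp' : p' < 1) (N : ℕ) :
    μ[(fun a => (Z (fun e => X a e ≤ p) N 0 : ℝ)) |
        MeasurableSpace.comap
          (fun a (e : Edge d) => (if X a e ≤ p' then (1 : ℝ) else 0)) inferInstance]
      =ᵐ[μ] fun a => (p / p') ^ N * (Z (fun e => X a e ≤ p') N 0 : ℝ) := by
  classical
  have hp'pos : (0 : ℝ) < p' := hp.trans hpp'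
  have hYm : Measurable (fun a (e : Edge d) => (if X a e ≤ p' then (1 : ℝ) else 0)) :=
    measurable_pi_lambda _ fun e =>
      Measurable.ite (measurableSet_le (hmeas e) measurable_const) measurable_const
        measurable_const
  have hm : MeasurableSpace.comap
      (fun a (e : Edge d) => (if X a e ≤ p' then (1 : ℝ) else 0)) inferInstance
      ≤ ‹MeasurableSpace Ω› := hYm.comap_le
  haveI : Finite {S : Fin (N + 1) → V d // IsSAW S ∧ S 0 = 0} :=
    Set.Finite.to_subtype (saw_finite d N)
  haveI : Fintype {S : Fin (N + 1) → V d // IsSAW S ∧ S 0 = 0} := Fintype.ofFinite _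
  have hZsum : ∀ η : Edge d → Prop, Z η N 0
      = ∑ T : {S : Fin (N + 1) → V d // IsSAW S ∧ S 0 = 0},
          if OpenPath η T.1 then 1 else 0 := by
    intro η
    have eqv : {S : Fin (N + 1) → V d // IsSAW S ∧ S 0 = 0 ∧ OpenPath η S} ≃
        {T : {S : Fin (N + 1) → V d // IsSAW S ∧ S 0 = 0} // OpenPath η T.1} :=
      { toFun := fun S => ⟨⟨S.1, S.2.1, S.2.2.1⟩, S.2.2.2⟩
        invFun := fun T => ⟨T.1.1, T.1.2.1, T.1.2.2, T.2⟩
        left_inv := fun S => rfl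
        right_inv := fun T => rfl }
    rw [Z, Nat.card_congr eqv, Nat.card_eq_fintype_card, Fintype.card_subtype,
      Finset.card_filter]
  have hOmem : ∀ (q : ℝ) (T : {S : Fin (N + 1) → V d // IsSAW S ∧ S 0 = 0}) (a : Ω),
      a ∈ Oset X q (edges T.1 T.2.1) ↔ OpenPath (fun e => X a e ≤ q) T.1 := by
    intro q T a
    rw [openPath_iff T.2.1]
    simp only [Oset, Set.mem_iInter, Set.mem_setOf_eq]
  have hZpt : ∀ (q : ℝ) (a : Ω), ((Z (fun e => X a e ≤ q) N 0 : ℕ) : ℝ)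
      = ∑ T : {S : Fin (N + 1) → V d // IsSAW S ∧ S 0 = 0},
          (Oset X q (edges T.1 T.2.1)).indicator (fun _ => (1 : ℝ)) a := by
    intro q a
    rw [hZsum, Nat.cast_sum]
    apply Finset.sum_congr rfl
    intro T _
    rw [Set.indicator_apply]
    by_cases hOp : OpenPath (fun e => X a e ≤ q) T.1
    · rw [if_pos hOp, if_pos ((hOmem q T a).mpr hOp), Nat.cast_one]
    · rw [if_neg hOp, if_neg fun h => hOp ((hOmem q T a).mp h), Nat.cast_zero]
  have hOmeas : ∀ (q : ℝ) (T : {S : Fin (N + 1) → V d // IsSAW S ∧ S 0 = 0}),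
      MeasurableSet (Oset X q (edges T.1 T.2.1)) :=
    fun q T => Oset_measurable hmeas q _
  have hint : ∀ (q : ℝ) (T : {S : Fin (N + 1) → V d // IsSAW S ∧ S 0 = 0}),
      Integrable ((Oset X q (edges T.1 T.2.1)).indicator (fun _ => (1 : ℝ))) μ :=
    fun q T => (integrable_const 1).indicator (hOmeas q T)
  have hf_int : ∀ q : ℝ,
      Integrable (fun a => ((Z (fun e => X a e ≤ q) N 0 : ℕ) : ℝ)) μ := by
    intro q
    have h : (fun a => ((Z (fun e => X a e ≤ q) N 0 : ℕ) : ℝ))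
        = fun a => ∑ T : {S : Fin (N + 1) → V d // IsSAW S ∧ S 0 = 0},
            (Oset X q (edges T.1 T.2.1)).indicator (fun _ => (1 : ℝ)) a := funext (hZpt q)
    rw [h]
    exact integrable_finset_sum _ fun T _ => hint q T
  have hsetint : ∀ (q : ℝ) (s : Set Ω), MeasurableSet s →
      ∫ x in s, ((Z (fun e => X x e ≤ q) N 0 : ℕ) : ℝ) ∂μ
        = ∑ T : {S : Fin (N + 1) → V d // IsSAW S ∧ S 0 = 0},
            (μ (s ∩ Oset X q (edges T.1 T.2.1))).toReal := by
    intro q s _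
    simp only [hZpt q]
    rw [integral_finset_sum _ fun T _ => (hint q T).integrableOn]
    apply Finset.sum_congr rfl
    intro T _
    rw [setIntegral_indicator (hOmeas q T), setIntegral_const, smul_eq_mul, mul_one, measureReal_def]
  have hkey : ∀ s : Set Ω, MeasurableSet[MeasurableSpace.comap
        (fun a (e : Edge d) => (if X a e ≤ p' then (1 : ℝ) else 0)) inferInstance] s →
      ∀ T : {S : Fin (N + 1) → V d // IsSAW S ∧ S 0 = 0},
        μ (s ∩ Oset X p (edges T.1 T.2.1))
          = ENNReal.ofReal (p / p') ^ N * μ (s ∩ Oset X p' (edges T.1 T.2.1)) := by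
    intro s hs T
    have h := key_measure μ X hmeas hunif hindep p p' hp hpp' hp' (edges T.1 T.2.1) hs
    rwa [card_edges T.2.1] at h
  haveI : SigmaFinite (μ.trim hm) := (isFiniteMeasure_trim hm).toSigmaFinite
  refine (ae_eq_condExp_of_forall_setIntegral_eq hm (hf_int p) ?_ ?_ ?_).symm
  · intro s _ _
    exact ((hf_int p').const_mul _).integrableOn
  · intro s hs _
    have hs' : MeasurableSet s := hm s hs
    rw [integral_const_mul, hsetint p' s hs', hsetint p s hs', Finset.mul_sum]
    symm
    apply Finset.sum_congr rfl
    intro T _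
    rw [hkey s hs T, ENNReal.toReal_mul, ENNReal.toReal_pow,
      ENNReal.toReal_ofReal (div_nonneg hp.le hp'pos.le)]
  · have hOsm : ∀ T : {S : Fin (N + 1) → V d // IsSAW S ∧ S 0 = 0},
        MeasurableSet[MeasurableSpace.comap
          (fun a (e : Edge d) => (if X a e ≤ p' then (1 : ℝ) else 0)) inferInstance]
          (Oset X p' (edges T.1 T.2.1)) := by
      intro T
      apply MeasurableSpace.measurableSet_comap.mpr
      refine ⟨⋂ e ∈ edges T.1 T.2.1, (fun y : Edge d → ℝ => y e) ⁻¹' {1}, ?_, ?_⟩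
      · exact Finset.measurableSet_biInter _ fun e _ =>
          (measurable_pi_apply e) (measurableSet_singleton 1)
      · ext a
        simp only [Set.mem_preimage, Set.mem_iInter, Set.mem_singleton_iff, Oset,
          Set.mem_setOf_eq]
        refine forall₂_congr fun e he => ?_
        constructor
        · intro h1
          by_contra hle
          rw [if_neg hle] at h1
          norm_num at h1
        · intro hle
          rw [if_pos hle]
    refine StronglyMeasurable.aestronglyMeasurable ?_
    have hsum : StronglyMeasurable[MeasurableSpace.comap
        (fun a (e : Edge d) => (if X a e ≤ p' then (1 : ℝ) else 0)) inferInstance]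
        (fun a => ∑ T : {S : Fin (N + 1) → V d // IsSAW S ∧ S 0 = 0},
          (Oset X p' (edges T.1 T.2.1)).indicator (fun _ => (1 : ℝ)) a) := by
      apply Finset.stronglyMeasurable_fun_sum
      intro T _
      exact stronglyMeasurable_const.indicator (hOsm T)
    have hgeq : (fun a => (p / p') ^ N * ((Z (fun e => X a e ≤ p') N 0 : ℕ) : ℝ))
        = fun a => (p / p') ^ N * ∑ T : {S : Fin (N + 1) → V d // IsSAW S ∧ S 0 = 0},
            (Oset X p' (edges T.1 T.2.1)).indicator (fun _ => (1 : ℝ)) a := by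
      funext a
      rw [hZpt p' a]
    rw [hgeq]
    exact hsum.const_mul _

end SAW
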